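/- Let G be a finite abelian group, H a subgroup of G, g an element of G not in H, and n the order of the coset gH in G/H. Then for any character χ of H (a homomorphism H → ℂˣ) and any complex number ζ with ζ^n = χ(g^n), there exists a character ψ of G extending χ with ψ(g) = ζ. -/

import Mathlib

open Subgroup

private lemma step_lemma {G : Type*} [CommGroup G] (K : Subgroup G) (g : G)
    (n : ℕ) (hn : n = orderOf ((g : G ⧸ K))) (hgn : g ^ n ∈ K)
    (φ : K →* ℂˣ) (ζ : ℂˣ) (hζ : ζ ^ n = φ ⟨g ^ n, hgn⟩) :
    ∃ (K' : Subgroup G) (φ' : K' →* ℂˣ), K ≤ K' ∧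
      (∃ hg' : g ∈ K', φ' ⟨g, hg'⟩ = ζ) ∧
      ∀ (k : G) (hk : k ∈ K) (hk' : k ∈ K'), φ' ⟨k, hk'⟩ = φ ⟨k, hk⟩ := by
  classical
  set f : K × Multiplicative ℤ →* G :=
    (K.subtype.comp (MonoidHom.fst _ _)) * ((zpowersHom G g).comp (MonoidHom.snd _ _)) with hf
  set χ' : K × Multiplicative ℤ →* ℂˣ :=
    (φ.comp (MonoidHom.fst _ _)) * ((zpowersHom ℂˣ ζ).comp (MonoidHom.snd _ _)) with hχ'
  have hfapp : ∀ w : K × Multiplicative ℤ, f w = (w.1 : G) * g ^ (Multiplicative.toAdd w.2) := by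
    intro w; rfl
  have hχapp : ∀ w : K × Multiplicative ℤ, χ' w = φ w.1 * ζ ^ (Multiplicative.toAdd w.2) := by
    intro w; rfl
  have hker : f.ker ≤ χ'.ker := by
    intro w hw
    rw [MonoidHom.mem_ker] at hw ⊢
    rw [hfapp] at hw
    set j : ℤ := Multiplicative.toAdd w.2 with hj
    -- g ^ j ∈ K
    have hgj : g ^ j ∈ K := by
      have : g ^ j = ((w.1 : G))⁻¹ := by
        rw [eq_inv_iff_mul_eq_one, mul_comm]; exact hw
      rw [this]; exact K.inv_mem w.1.2
    have hdvd : (n : ℤ) ∣ j := by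
      rw [hn, orderOf_dvd_iff_zpow_eq_one, ← QuotientGroup.mk_zpow,
        QuotientGroup.eq_one_iff]
      exact hgj
    obtain ⟨m, hm⟩ := hdvd
    have hw1 : w.1 = (⟨g ^ n, hgn⟩ : K) ^ (-m) := by
      apply Subtype.ext
      push_cast
      have hinv : (w.1 : G) = (g ^ j)⁻¹ := by
        rw [eq_inv_iff_mul_eq_one]; exact hw
      rw [hinv, ← zpow_neg, hm, ← mul_neg, ← zpow_natCast g n, ← zpow_mul]
    rw [hχapp, hw1, map_zpow, ← hζ, ← hj, hm, ← zpow_natCast ζ n, ← zpow_mul, ← zpow_add]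
    have hzero : ((n : ℤ) * -m + (n : ℤ) * m : ℤ) = 0 := by ring
    rw [hzero, zpow_zero]
  -- lift χ' to the range of f
  let q : (K × Multiplicative ℤ) ⧸ f.ker →* ℂˣ :=
    QuotientGroup.lift f.ker χ' (fun w hw => hker hw)
  let e : (K × Multiplicative ℤ) ⧸ f.ker ≃* f.range := QuotientGroup.quotientKerEquivRange f
  refine ⟨f.range, q.comp e.symm.toMonoidHom, ?_, ?_, ?_⟩
  · intro k hk
    exact ⟨(⟨k, hk⟩, 1), by simp [hfapp]⟩
  · have key : ∀ (w : K × Multiplicative ℤ) (hx : f w ∈ f.range),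
        q.comp e.symm.toMonoidHom ⟨f w, hx⟩ = χ' w := by
      intro w hx
      have he : e.symm ⟨f w, hx⟩ = QuotientGroup.mk w := by
        rw [MulEquiv.symm_apply_eq]
        rfl
      simp only [MonoidHom.comp_apply, MulEquiv.coe_toMonoidHom, he]
      rfl
    have hg' : g ∈ f.range := ⟨(1, Multiplicative.ofAdd 1), by simp [hfapp]⟩
    refine ⟨hg', ?_⟩
    have : (⟨g, hg'⟩ : f.range) = ⟨f (1, Multiplicative.ofAdd 1), MonoidHom.mem_range.mpr ⟨_, rfl⟩⟩ := by
      apply Subtype.ext; simp [hfapp]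
    rw [this, key]
    simp [hχapp]
  · intro k hk hk'
    have key : ∀ (w : K × Multiplicative ℤ) (hx : f w ∈ f.range),
        q.comp e.symm.toMonoidHom ⟨f w, hx⟩ = χ' w := by
      intro w hx
      have he : e.symm ⟨f w, hx⟩ = QuotientGroup.mk w := by
        rw [MulEquiv.symm_apply_eq]
        rfl
      simp only [MonoidHom.comp_apply, MulEquiv.coe_toMonoidHom, he]
      rfl
    have : (⟨k, hk'⟩ : f.range) = ⟨f (⟨k, hk⟩, 1), MonoidHom.mem_range.mpr ⟨_, rfl⟩⟩ := by
      apply Subtype.ext; simp [hfapp]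
    rw [this, key]
    simp [hχapp]

private lemma ext_lemma {G : Type*} [CommGroup G] [Finite G] :
    ∀ (m : ℕ) (K : Subgroup G) (φ : K →* ℂˣ), Nat.card G - Nat.card K ≤ m →
    ∃ ψ : G →* ℂˣ, ∀ k : K, ψ (k : G) = φ k := by
  intro m
  induction m with
  | zero =>
    intro K φ hm
    have hcard : Nat.card G ≤ Nat.card K := by
      have hle : Nat.card K ≤ Nat.card G := Nat.card_le_card_of_injective _ K.subtype_injective
      omega
    have hK : K = ⊤ := Subgroup.eq_top_of_le_card K hcard
    subst hK
    exact ⟨φ.comp ((MonoidHom.id G).codRestrict ⊤ (fun _ => trivial)),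
      fun k => congrArg φ (Subtype.ext rfl)⟩
  | succ m ih =>
    intro K φ hm
    by_cases hK : K = ⊤
    · subst hK
      exact ⟨φ.comp ((MonoidHom.id G).codRestrict ⊤ (fun _ => trivial)),
        fun k => congrArg φ (Subtype.ext rfl)⟩
    · have hex : ∃ g : G, g ∉ K := by
        by_contra h
        push_neg at h
        exact hK ((Subgroup.eq_top_iff' K).mpr h)
      obtain ⟨g, hg⟩ := hex
      set n : ℕ := orderOf ((g : G ⧸ K)) with hn
      have hn0 : 0 < n := orderOf_pos _
      have hgn : g ^ n ∈ K := by
        rw [← QuotientGroup.eq_one_iff, QuotientGroup.mk_pow, hn]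
        exact pow_orderOf_eq_one _
      obtain ⟨z, hz⟩ := IsAlgClosed.exists_pow_nat_eq ((φ ⟨g ^ n, hgn⟩ : ℂˣ) : ℂ) hn0
      have hz0 : z ≠ 0 := by
        intro h
        rw [h, zero_pow hn0.ne'] at hz
        exact (φ ⟨g ^ n, hgn⟩).ne_zero hz.symm
      set ζ : ℂˣ := Units.mk0 z hz0 with hζdef
      have hζ : ζ ^ n = φ ⟨g ^ n, hgn⟩ := by
        ext; push_cast [hζdef]; exact hz
      obtain ⟨K', φ', hKK', ⟨hg', -⟩, hres⟩ := step_lemma K g n hn hgn φ ζ hζ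
      have hlt : Nat.card K < Nat.card K' := by
        have hss : (K : Set G) ⊂ (K' : Set G) :=
          (Set.ssubset_iff_of_subset hKK').mpr ⟨g, hg', hg⟩
        have h2 := Set.ncard_lt_ncard hss (Set.toFinite _)
        simpa [← Nat.card_coe_set_eq] using h2
      have hle' : Nat.card K' ≤ Nat.card G := Nat.card_le_card_of_injective _ K'.subtype_injective
      obtain ⟨ψ, hψ⟩ := ih K' φ' (by omega)
      refine ⟨ψ, fun k => ?_⟩
      rw [show (k : G) = ((⟨(k : G), hKK' k.2⟩ : K') : G) from rfl, hψ]
      exact hres k k.2 _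

/-- Character extension lemma: a character of `H` extends to `G` with prescribed
value at `g`, any `n`-th root of `χ (g ^ n)` where `n` is the order of `gH` in `G ⧸ H`. -/
theorem stmt_0 {G : Type*} [CommGroup G] [Finite G] (H : Subgroup G) (g : G)
    (hg : g ∉ H) (n : ℕ) (hn : n = orderOf ((g : G ⧸ H)))
    (hgn : g ^ n ∈ H) (χ : H →* ℂˣ) (ζ : ℂˣ) (hζ : ζ ^ n = χ ⟨g ^ n, hgn⟩) :
    ∃ ψ : G →* ℂˣ, (∀ h : H, ψ (h : G) = χ h) ∧ ψ g = ζ := by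
  obtain ⟨K', φ', hKK', ⟨hg', hgval⟩, hres⟩ := step_lemma H g n hn hgn χ ζ hζ
  obtain ⟨ψ, hψ⟩ := ext_lemma (Nat.card G - Nat.card K') K' φ' le_rfl
  refine ⟨ψ, fun h => ?_, ?_⟩
  · rw [show (h : G) = ((⟨(h : G), hKK' h.2⟩ : K') : G) from rfl, hψ]
    exact hres h h.2 _
  · rw [show g = ((⟨g, hg'⟩ : K') : G) from rfl, hψ, hgval]
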